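/- Let Γ be a group acting by homeomorphisms on a nonempty compact Hausdorff space X (with its Borel σ-algebra), suppose the action is strongly proximal, and let N be a normal subgroup of Γ. If there exists an N-invariant Borel probability measure on X, then N has a fixed point in X, i.e. there exists x ∈ X with n·x = x for all n ∈ N. (Key step in the proof of Proposition 3.12: the set of N-invariant probability measures is closed, Γ-invariant by normality, and by strong proximality contains a Dirac measure.) -/

import Mathlib

open MeasureTheory

/-- Pushforward of a probability measure under the action of a group element. -/
noncomputable def pushForwardPM {G X : Type*} [Group G] [TopologicalSpace X]
    [MeasurableSpace X] [BorelSpace X] [MulAction G X] [ContinuousConstSMul G X]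
    (g : G) (ν : ProbabilityMeasure X) : ProbabilityMeasure X :=
  ν.map (f := fun x => g • x) (continuous_const_smul g).measurable.aemeasurable

/-- The action `Γ ↷ X` is strongly proximal: the weak*-closure of the orbit of any Borel
probability measure contains a Dirac measure. -/
def IsStronglyProximal (G : Type*) {X : Type*} [Group G] [TopologicalSpace X]
    [MeasurableSpace X] [BorelSpace X] [MulAction G X] [ContinuousConstSMul G X] : Prop :=
  ∀ ν : ProbabilityMeasure X, ∃ x : X,
    (⟨Measure.dirac x, inferInstance⟩ : ProbabilityMeasure X) ∈
      closure {μ : ProbabilityMeasure X | ∃ g : G, μ = pushForwardPM g ν}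

/-- Key step in Proposition 3.12: for a strongly proximal action and a normal subgroup `N`,
an `N`-invariant Borel probability measure yields a common fixed point for `N`. -/
theorem exists_fixed_point_of_invariant_measure_of_stronglyProximal
    {G X : Type*} [Group G] [TopologicalSpace X] [CompactSpace X] [T2Space X] [Nonempty X]
    [MeasurableSpace X] [BorelSpace X] [MulAction G X] [ContinuousConstSMul G X]
    (hprox : IsStronglyProximal G (X := X))
    (N : Subgroup G) (hN : N.Normal)
    (h : ∃ ν : Measure X, IsProbabilityMeasure ν ∧
        ∀ n ∈ N, Measure.map (fun x => n • x) ν = ν) :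
    ∃ x : X, ∀ n ∈ N, n • x = x := by
  obtain ⟨ν, hνprob, hνinv⟩ := h
  obtain ⟨x, hx⟩ := hprox ⟨ν, hνprob⟩
  refine ⟨x, fun n hn => ?_⟩
  -- every element of the orbit is N-invariant
  have horb : ∀ g : G, Measure.map (fun y => n • y)
      ((pushForwardPM g (⟨ν, hνprob⟩ : ProbabilityMeasure X) : ProbabilityMeasure X) : Measure X)
      = (pushForwardPM g (⟨ν, hνprob⟩ : ProbabilityMeasure X) : Measure X) := by
    intro g
    have hmg : Measurable fun y : X => g • y := (continuous_const_smul g).measurable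
    have hmn : Measurable fun y : X => n • y := (continuous_const_smul n).measurable
    have hm' : Measurable fun y : X => (g⁻¹ * n * g) • y :=
      (continuous_const_smul _).measurable
    have hcoe : ((pushForwardPM g (⟨ν, hνprob⟩ : ProbabilityMeasure X) : ProbabilityMeasure X)
        : Measure X) = Measure.map (fun y => g • y) ν := by
      exact ProbabilityMeasure.toMeasure_map _ _
    rw [hcoe, Measure.map_map hmn hmg]
    have key : ((fun y : X => n • y) ∘ fun y : X => g • y)
        = (fun y : X => g • y) ∘ fun y : X => (g⁻¹ * n * g) • y := by
      funext y
      simp [Function.comp, smul_smul, mul_assoc]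
    rw [key, ← Measure.map_map hmg hm', hνinv _ (by simpa using hN.conj_mem n hn g⁻¹)]
  -- f(n • x) = f x for every bounded continuous f
  have hfix : ∀ f : BoundedContinuousFunction X ℝ, f (n • x) = f x := by
    intro f
    set F : ProbabilityMeasure X → ℝ := fun μ =>
      (∫ y, f y ∂(Measure.map (fun y => n • y) (μ : Measure X))) - ∫ y, f y ∂(μ : Measure X)
      with hF
    have hmn : Measurable fun y : X => n • y := (continuous_const_smul n).measurable
    have hFeq : F = fun μ : ProbabilityMeasure X =>
        (∫ y, f (n • y) ∂(μ : Measure X)) - ∫ y, f y ∂(μ : Measure X) := by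
      funext μ
      show (∫ y, f y ∂(Measure.map (fun y => n • y) (μ : Measure X)))
        - ∫ y, f y ∂(μ : Measure X) = _
      rw [integral_map hmn.aemeasurable f.continuous.aestronglyMeasurable]
    have hFcont : Continuous F := by
      rw [hFeq]
      exact ((ProbabilityMeasure.continuous_integral_boundedContinuousFunction
        (f.compContinuous ⟨fun y : X => n • y, continuous_const_smul n⟩)).sub
        (ProbabilityMeasure.continuous_integral_boundedContinuousFunction f))
    have hFzero : ∀ μ ∈ {μ : ProbabilityMeasure X | ∃ g : G,
        μ = pushForwardPM g (⟨ν, hνprob⟩ : ProbabilityMeasure X)}, F μ = 0 := by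
      rintro μ ⟨g, rfl⟩
      simp only [hF, horb g]
      ring
    have hclosed : closure {μ : ProbabilityMeasure X | ∃ g : G,
        μ = pushForwardPM g (⟨ν, hνprob⟩ : ProbabilityMeasure X)} ⊆ F ⁻¹' {0} :=
      closure_minimal (fun μ hμ => hFzero μ hμ) (isClosed_singleton.preimage hFcont)
    have hx0 : F ⟨Measure.dirac x, inferInstance⟩ = 0 := hclosed hx
    rw [hFeq] at hx0
    simp only [ProbabilityMeasure.coe_mk] at hx0
    rw [integral_dirac, integral_dirac] at hx0
    linarith
  -- conclude by Urysohn / separation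
  by_contra hne
  obtain ⟨f, hf0, hf1, -⟩ := exists_continuous_zero_one_of_isClosed
    (isClosed_singleton (x := n • x)) (isClosed_singleton (x := x))
    (by simpa [Set.disjoint_singleton] using hne)
  have h0 : f (n • x) = 0 := hf0 rfl
  have h1 : f x = 1 := hf1 rfl
  have := hfix (BoundedContinuousFunction.mkOfCompact f)
  simp only [BoundedContinuousFunction.mkOfCompact_apply] at this
  rw [h0, h1] at this
  exact zero_ne_one this
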